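/- Let L̃ be a (Ψ,C) weighted dependency graph for a family {Y_α, α ∈ A} of random variables (A finite), and let A₁,…,A_r be subsets of A. With R = Σ_{α∈A} Ψ({α}) and T_ℓ = max_{α₁,…,α_ℓ∈A} Σ_{β∈A} W({β},{α₁,…,α_ℓ}) Ψ({α₁,…,α_ℓ,β})/Ψ({α₁,…,α_ℓ}), one has |κ(Σ_{α∈A₁} Y_α, …, Σ_{α∈A_r} Y_α)| ≤ C_r · r! · R · T₁ ⋯ T_{r−1}. -/

import Mathlib

open MeasureTheory ProbabilityTheory Filter

noncomputable section

namespace WDGpaper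

/-- The joint cumulant of a finite family of real random variables, defined through
the moment-cumulant formula over set partitions. -/
noncomputable def jointCumulant {Ω : Type*} [MeasurableSpace Ω] (μ : Measure Ω)
    {r : ℕ} (X : Fin r → Ω → ℝ) : ℝ :=
  ∑ π : Finpartition (Finset.univ : Finset (Fin r)),
    (-1 : ℝ) ^ (π.parts.card - 1) * (Nat.factorial (π.parts.card - 1) : ℝ) *
      ∏ B ∈ π.parts, ∫ ω, ∏ i ∈ B, X i ω ∂μ

/-- Symmetrized weight function on unordered pairs, from a function on ordered pairs. -/
noncomputable def edgeWeight {V : Type*} (w : V → V → ℝ) : Sym2 V → ℝ :=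
  Sym2.lift ⟨fun a b => max (w a b) (w b a), fun _ _ => max_comm _ _⟩

/-- `T` is (the edge set of) a spanning tree of the complete graph on `V`. -/
def IsSpanningTree (V : Type*) [Fintype V] [DecidableEq V] (T : Finset (Sym2 V)) : Prop :=
  (∀ e ∈ T, ¬ e.IsDiag) ∧ (SimpleGraph.fromEdgeSet (↑T : Set (Sym2 V))).Connected ∧
    T.card + 1 = Fintype.card V

/-- The maximal weight (product of edge weights) of a spanning tree of the weighted
graph with vertex set `V` and weight function `w`; it equals `0` (the `sSup` of the
empty set) when the weighted graph has no spanning tree, i.e. is disconnected. -/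
noncomputable def treeMax {V : Type*} [Fintype V] [DecidableEq V] (w : V → V → ℝ) : ℝ :=
  sSup {x : ℝ | ∃ T : Finset (Sym2 V), IsSpanningTree V T ∧ x = ∏ e ∈ T, edgeWeight w e}

/-- The weight function of the weighted graph induced (on the multiset of vertices
`{f x : x : β}`, counted with multiplicity) by the weighted graph `w` on `A`:
two copies of the same vertex are linked by weight `1`, and otherwise the weight of
the corresponding edge of `w` is used. -/
noncomputable def inducedW {A β : Type*} [DecidableEq A] (w : A → A → ℝ) (f : β → A) :
    β → β → ℝ :=
  fun x y => if f x = f y then 1 else w (f x) (f y)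

/-- `W({β}, {a 0, …, a (ℓ-1)})`: maximal weight of an edge joining `β` to one of the
`a i`, with the convention that it is `1` if `β` is one of the `a i`,
and `0` (empty `sSup`) if `ℓ = 0`. -/
noncomputable def Wpt {A : Type*} [DecidableEq A] (w : A → A → ℝ) (β : A) {ℓ : ℕ}
    (a : Fin ℓ → A) : ℝ :=
  sSup {x : ℝ | ∃ i : Fin ℓ, x = if β = a i then 1 else w β (a i)}

/-- `w` is a `(Ψ, C)` weighted dependency graph for the family `Y`:
for every multiset `B = {b 0, …, b (r-1)}` of elements of `A` (`r ≥ 1`), the joint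
cumulant of the corresponding variables is bounded by `C r * Ψ B * M(L̃[B])`. -/
def IsWDG {Ω : Type*} [MeasurableSpace Ω] (μ : Measure Ω) {A : Type*} [DecidableEq A]
    (Y : A → Ω → ℝ) (w : A → A → ℝ) (Ψ : Multiset A → ℝ) (C : ℕ → ℝ) : Prop :=
  ∀ r : ℕ, 1 ≤ r → ∀ b : Fin r → A,
    |jointCumulant μ fun i => Y (b i)| ≤
      C r * Ψ (List.ofFn b : Multiset A) * treeMax (inducedW w b)

end WDGpaper

open WDGpaper

section helpers
variable {A : Type*} [DecidableEq A]

lemma Wpt_nonneg (w : A → A → ℝ) (hw0 : ∀ a b, 0 ≤ w a b) (β : A) {ℓ : ℕ} (a : Fin ℓ → A) :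
    0 ≤ Wpt w β a := by
  apply Real.sSup_nonneg
  rintro x ⟨i, rfl⟩
  split
  · norm_num
  · exact hw0 _ _

lemma le_Wpt (w : A → A → ℝ) (β : A) {ℓ : ℕ} (a : Fin ℓ → A) (i : Fin ℓ) :
    (if β = a i then 1 else w β (a i)) ≤ Wpt w β a := by
  apply le_csSup
  · have : {x : ℝ | ∃ i : Fin ℓ, x = if β = a i then 1 else w β (a i)} =
        Set.range (fun i : Fin ℓ => if β = a i then 1 else w β (a i)) := by
      ext x; simp [Set.range, eq_comm]
    rw [this]
    exact Set.Finite.bddAbove (Set.finite_range _)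
  · exact ⟨i, rfl⟩

lemma le_Wpt' (w : A → A → ℝ) (β : A) {ℓ : ℕ} (a : Fin ℓ → A) (c : A)
    (h : ∃ i, a i = c) : (if β = c then 1 else w β c) ≤ Wpt w β a := by
  obtain ⟨i, rfl⟩ := h
  exact le_Wpt w β a i

noncomputable def chainW (w : A → A → ℝ) {r : ℕ} (a : Fin r → A) : ℝ :=
  ∏ j : Fin r, if (j : ℕ) = 0 then 1 else
    Wpt w (a j) (fun i : Fin (j : ℕ) => a ⟨i, i.2.trans j.2⟩)

lemma chainW_nonneg (w : A → A → ℝ) (hw0 : ∀ a b, 0 ≤ w a b) {r : ℕ} (a : Fin r → A) :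
    0 ≤ chainW w a := by
  apply Finset.prod_nonneg
  intro j _
  split
  · norm_num
  · exact Wpt_nonneg w hw0 _ _

lemma chainW_snoc (w : A → A → ℝ) {r : ℕ} (a : Fin r → A) (β : A) :
    chainW w (Fin.snoc a β : Fin (r+1) → A) = chainW w a * (if r = 0 then 1 else Wpt w β a) := by
  rw [chainW, Fin.prod_univ_castSucc]
  congr 1
  · rw [chainW]
    apply Finset.prod_congr rfl
    intro j _
    have hv : ((j.castSucc : Fin (r+1)) : ℕ) = (j : ℕ) := rfl
    by_cases h : (j : ℕ) = 0
    · simp [hv, h]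
    · rw [if_neg (by simpa [hv] using h), if_neg h]
      have h1 : (Fin.snoc a β : Fin (r+1) → A) j.castSucc = a j := by simp
      have h2 : (fun i : Fin ((j.castSucc : Fin (r+1)) : ℕ) =>
          (Fin.snoc a β : Fin (r+1) → A) ⟨(i : ℕ), i.2.trans j.castSucc.2⟩)
          = fun i : Fin (j : ℕ) => a ⟨(i : ℕ), i.2.trans j.2⟩ := by
        funext i
        have : (⟨(i : ℕ), i.2.trans j.castSucc.2⟩ : Fin (r+1))
            = Fin.castSucc ⟨(i : ℕ), i.2.trans j.2⟩ := by
          ext; rfl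
        rw [this, Fin.snoc_castSucc]
      rw [h1]
      exact congrArg _ h2
  · have hv : ((Fin.last r : Fin (r+1)) : ℕ) = r := rfl
    by_cases h : r = 0
    · simp [hv, h]
    · rw [if_neg (by simpa [hv] using h), if_neg h]
      have h1 : (Fin.snoc a β : Fin (r+1) → A) (Fin.last r) = β := by simp
      have h2 : (fun i : Fin ((Fin.last r : Fin (r+1)) : ℕ) =>
          (Fin.snoc a β : Fin (r+1) → A) ⟨(i : ℕ), i.2.trans (Fin.last r).2⟩) = a := by
        funext i
        have : (⟨(i : ℕ), i.2.trans (Fin.last r).2⟩ : Fin (r+1))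
            = Fin.castSucc ⟨(i : ℕ), i.2⟩ := by ext; rfl
        rw [this, Fin.snoc_castSucc]
      rw [h1]
      exact congrArg _ h2

lemma ofFn_snoc_multiset {r : ℕ} (a : Fin r → A) (β : A) :
    ((List.ofFn (Fin.snoc a β : Fin (r+1) → A) : List A) : Multiset A) = (List.ofFn a : Multiset A) + {β} := by
  rw [List.ofFn_succ' (Fin.snoc a β : Fin (r+1) → A)]
  simp only [Fin.snoc_castSucc, Fin.snoc_last, List.concat_eq_append]
  rw [← Multiset.coe_add]
  rfl

lemma ofFn_comp_perm_multiset {r : ℕ} (b : Fin r → A) (σ : Equiv.Perm (Fin r)) :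
    ((List.ofFn (b ∘ σ) : List A) : Multiset A) = (List.ofFn b : Multiset A) := by
  rw [Multiset.coe_eq_coe]
  rw [List.ofFn_eq_map, List.ofFn_eq_map]
  have : List.map (b ∘ σ) (List.finRange r) = List.map b (List.map σ (List.finRange r)) := by
    rw [List.map_map]
  rw [this]
  apply List.Perm.map
  apply List.perm_of_nodup_nodup_toFinset_eq
  · exact (List.nodup_finRange r).map σ.injective
  · exact List.nodup_finRange r
  · ext x
    simp [List.mem_map]
    exact ⟨σ.symm x, by simp⟩


lemma inducedW_symm (w : A → A → ℝ) (hsym : ∀ a b, w a b = w b a) {β : Type*} (f : β → A)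
    (x y : β) : inducedW w f x y = inducedW w f y x := by
  simp only [inducedW]
  by_cases h : f x = f y
  · rw [if_pos h, if_pos h.symm]
  · rw [if_neg h, if_neg (fun hh => h hh.symm), hsym]

lemma edgeWeight_mk (w : A → A → ℝ) (hsym : ∀ a b, w a b = w b a) {β : Type*} (f : β → A)
    (x y : β) : edgeWeight (inducedW w f) s(x, y) = inducedW w f x y := by
  rw [edgeWeight, Sym2.lift_mk]
  show max (inducedW w f x y) (inducedW w f y x) = inducedW w f x y
  rw [inducedW_symm w hsym f y x, max_self]

lemma edgeWeight_inducedW_nonneg {β : Type*} (w : A → A → ℝ) (hw0 : ∀ a b, 0 ≤ w a b)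
    (f : β → A) (e : Sym2 β) : 0 ≤ edgeWeight (inducedW w f) e := by
  induction e using Sym2.ind with
  | _ u v =>
    rw [edgeWeight, Sym2.lift_mk]
    refine le_trans ?_ (le_max_left _ _)
    simp only [inducedW]
    split
    · norm_num
    · exact hw0 _ _

lemma edgeWeight_inducedW_le_one {β : Type*} (w : A → A → ℝ) (hw1 : ∀ a b, w a b ≤ 1)
    (f : β → A) (e : Sym2 β) : edgeWeight (inducedW w f) e ≤ 1 := by
  induction e using Sym2.ind with
  | _ u v =>
    rw [edgeWeight, Sym2.lift_mk]
    apply max_le <;> (simp only [inducedW]; split)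
    · norm_num
    · exact hw1 _ _
    · norm_num
    · exact hw1 _ _

lemma treeMax_le_sum_chainW {r : ℕ} (hr : 1 ≤ r)
    (w : A → A → ℝ) (hsym : ∀ a b, w a b = w b a)
    (hw0 : ∀ a b, 0 ≤ w a b) (hw1 : ∀ a b, w a b ≤ 1) (b : Fin r → A) :
    treeMax (inducedW w b) ≤ ∑ σ : Equiv.Perm (Fin r), chainW w (b ∘ σ) := by
  have hsumnn : 0 ≤ ∑ σ : Equiv.Perm (Fin r), chainW w (b ∘ σ) :=
    Finset.sum_nonneg fun σ _ => chainW_nonneg w hw0 _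
  apply Real.sSup_le _ hsumnn
  rintro x ⟨Tr, ⟨hdiag, hconn, hcard⟩, rfl⟩
  set G := SimpleGraph.fromEdgeSet (↑Tr : Set (Sym2 (Fin r))) with hG
  set z : Fin r := ⟨0, hr⟩ with hz
  set d : Fin r → ℕ := fun v => G.dist z v with hd
  set σ : Equiv.Perm (Fin r) := Tuple.sort d with hσ
  have hmono : Monotone (d ∘ ⇑σ) := Tuple.monotone_sort d
  have hmin : d (σ z) = 0 := by
    have h1 : z ≤ σ.symm z := by rw [Fin.le_def]; exact Nat.zero_le _
    have h2 := hmono h1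
    simp only [Function.comp_apply, Equiv.apply_symm_apply] at h2
    have h3 : d z = 0 := by simp [hd]
    omega
  have hσz : σ z = z := by
    have := (hconn.dist_eq_zero_iff (u := z) (v := σ z)).mp hmin
    exact this.symm
  have key : ∀ j : Fin r, (j : ℕ) ≠ 0 → ∃ i : Fin r, i < j ∧ G.Adj (σ i) (σ j) := by
    intro j hj
    have hjz : j ≠ z := by
      intro h; apply hj; rw [h, hz]
    have hne : σ j ≠ z := by
      intro h
      exact hjz (σ.injective (h.trans hσz.symm))
    have hreach : G.Reachable (σ j) z := hconn.preconnected _ _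
    obtain ⟨p, hp⟩ := hreach.exists_walk_length_eq_dist
    obtain ⟨y, hadj, q, rfl⟩ := p.exists_eq_cons_of_ne hne
    have hdx : G.dist y z ≤ q.length := SimpleGraph.dist_le q
    have hlen : (SimpleGraph.Walk.cons hadj q).length = q.length + 1 :=
      SimpleGraph.Walk.length_cons _ _
    have hlt : d y < d (σ j) := by
      have c1 : d y = G.dist y z := by rw [hd]; exact SimpleGraph.dist_comm ..
      have c2 : d (σ j) = G.dist (σ j) z := by rw [hd]; exact SimpleGraph.dist_comm ..
      rw [c1, c2, ← hp, hlen]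
      omega
    refine ⟨σ.symm y, ?_, ?_⟩
    · by_contra h
      push_neg at h
      have h2 := hmono h
      simp only [Function.comp_apply, Equiv.apply_symm_apply] at h2
      omega
    · simpa using hadj.symm
  have key' : ∀ j : Fin r, ∃ i : Fin r, (j : ℕ) ≠ 0 → (i < j ∧ G.Adj (σ i) (σ j)) := by
    intro j
    by_cases hj : (j : ℕ) = 0
    · exact ⟨j, fun h => absurd hj h⟩
    · obtain ⟨i, h1, h2⟩ := key j hj
      exact ⟨i, fun _ => ⟨h1, h2⟩⟩
  choose I hI using key'
  set J : Finset (Fin r) := Finset.univ.filter (fun j => (j : ℕ) ≠ 0) with hJ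
  have hmemJ : ∀ j : Fin r, j ∈ J ↔ (j : ℕ) ≠ 0 := by
    intro j; simp [hJ]
  set E : Fin r → Sym2 (Fin r) := fun j => s(σ (I j), σ j) with hE
  set f : Sym2 (Fin r) → ℝ := edgeWeight (inducedW w b) with hf
  have hf0 : ∀ e, 0 ≤ f e := edgeWeight_inducedW_nonneg w hw0 b
  have hf1 : ∀ e, f e ≤ 1 := edgeWeight_inducedW_le_one w hw1 b
  have hEmem : ∀ j ∈ J, E j ∈ Tr := by
    intro j hj
    have h2 := (hI j ((hmemJ j).mp hj)).2
    rw [hG, SimpleGraph.fromEdgeSet_adj] at h2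
    simpa using h2.1
  have hEinj : ∀ j ∈ J, ∀ j' ∈ J, E j = E j' → j = j' := by
    intro j hj j' hj' heq
    have h1 := (hI j ((hmemJ j).mp hj)).1
    have h1' := (hI j' ((hmemJ j').mp hj')).1
    rw [hE, Sym2.eq_iff] at heq
    rcases heq with ⟨ha, hb⟩ | ⟨ha, hb⟩
    · exact σ.injective hb
    · have e1 : I j = j' := σ.injective ha
      have e2 : j = I j' := σ.injective hb
      rw [e1] at h1
      rw [← e2] at h1'
      exact absurd h1 (lt_asymm h1')
  have himg : J.image E ⊆ Tr := by
    intro e he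
    obtain ⟨j, hj, rfl⟩ := Finset.mem_image.mp he
    exact hEmem j hj
  have h5 : ∏ e ∈ Tr, f e ≤ ∏ e ∈ J.image E, f e := by
    rw [← Finset.prod_sdiff himg]
    exact mul_le_of_le_one_left (Finset.prod_nonneg fun e _ => hf0 e)
      (Finset.prod_le_one (fun e _ => hf0 e) (fun e _ => hf1 e))
  have h8 : ∏ e ∈ J.image E, f e = ∏ j ∈ J, f (E j) := Finset.prod_image hEinj
  set g : Fin r → ℝ := fun j => if (j : ℕ) = 0 then 1 else
    Wpt w ((b ∘ σ) j) (fun i : Fin (j : ℕ) => (b ∘ σ) ⟨i, i.2.trans j.2⟩) with hg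
  have h9 : ∀ j ∈ J, f (E j) ≤ g j := by
    intro j hj
    have hj0 := (hmemJ j).mp hj
    have hlt := (hI j hj0).1
    have hx : f (E j) = inducedW w b (σ j) (σ (I j)) := by
      rw [hf, hE, edgeWeight_mk w hsym, inducedW_symm w hsym]
    have h := le_Wpt' w ((b ∘ ⇑σ) j) (fun i : Fin (j : ℕ) => (b ∘ ⇑σ) ⟨i, i.2.trans j.2⟩)
      (b (σ (I j))) ⟨⟨(I j : ℕ), hlt⟩, rfl⟩
    show f (E j) ≤ if (j : ℕ) = 0 then (1:ℝ) else
      Wpt w ((b ∘ ⇑σ) j) (fun i : Fin (j : ℕ) => (b ∘ ⇑σ) ⟨i, i.2.trans j.2⟩)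
    rw [if_neg hj0, hx]
    exact h
  have h10 : ∏ j ∈ J, f (E j) ≤ ∏ j ∈ J, g j :=
    Finset.prod_le_prod (fun j _ => hf0 _) h9
  have h11 : ∏ j ∈ J, g j = chainW w (b ∘ σ) := by
    rw [chainW, ← Finset.prod_filter_mul_prod_filter_not Finset.univ
      (fun j : Fin r => (j : ℕ) ≠ 0) g]
    have : ∏ j ∈ Finset.univ.filter (fun j : Fin r => ¬ (j : ℕ) ≠ 0), g j = 1 := by
      apply Finset.prod_eq_one
      intro j hj
      rw [Finset.mem_filter] at hj
      rw [hg]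
      simp only [if_pos (not_not.mp hj.2)]
    rw [this, mul_one]
  have hle : ∏ e ∈ Tr, f e ≤ chainW w (b ∘ σ) := by
    rw [← h11]
    exact le_trans h5 (le_trans (le_of_eq h8) h10)
  refine le_trans hle ?_
  exact Finset.single_le_sum (f := fun τ : Equiv.Perm (Fin r) => chainW w (b ∘ ⇑τ))
    (fun τ _ => chainW_nonneg w hw0 (b ∘ ⇑τ)) (Finset.mem_univ σ)
end helpers

section lemB
variable {A : Type*} [Fintype A] [DecidableEq A] [Nonempty A]

lemma sum_psi_chainW_le
    (w : A → A → ℝ) (hw0 : ∀ a b, 0 ≤ w a b)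
    (Ψ : Multiset A → ℝ) (hΨ : ∀ B, 0 < Ψ B)
    (R : ℝ) (hR : R = ∑ α : A, Ψ {α})
    (T : ℕ → ℝ)
    (hT : ∀ ℓ : ℕ, 1 ≤ ℓ → T ℓ = ⨆ a : Fin ℓ → A, ∑ β : A,
        Wpt w β a * (Ψ ((List.ofFn a : Multiset A) + {β}) / Ψ (List.ofFn a : Multiset A)))
    (r : ℕ) (hr : 1 ≤ r) :
    ∑ a : Fin r → A, Ψ (List.ofFn a : Multiset A) * chainW w a
      ≤ R * ∏ ℓ ∈ Finset.Ico 1 r, T ℓ := by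
  induction r, hr using Nat.le_induction with
  | base =>
    rw [Finset.Ico_self, Finset.prod_empty, mul_one, hR]
    apply le_of_eq
    apply Fintype.sum_equiv (Equiv.funUnique (Fin 1) A)
    intro a
    have h1 : chainW w a = 1 := by
      rw [chainW, Fin.prod_univ_one]
      simp
    have h2 : (List.ofFn a : Multiset A) = {a 0} := by
      simp [List.ofFn_succ]
    rw [h1, h2, mul_one]
    rfl
  | succ n hn ih =>
    have hne : n ≠ 0 := Nat.one_le_iff_ne_zero.mp hn
    let e : ((Fin n → A) × A) ≃ (Fin (n+1) → A) :=
      { toFun := fun p => (Fin.snoc p.1 p.2 : Fin (n+1) → A)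
        invFun := fun a => (fun i => a i.castSucc, a (Fin.last n))
        left_inv := by
          intro p
          refine Prod.ext ?_ ?_
          · funext i; simp
          · simp
        right_inv := by
          intro a
          exact Fin.snoc_init_self a }
    rw [← Equiv.sum_comp e (fun a : Fin (n+1) → A =>
        Ψ (List.ofFn a : Multiset A) * chainW w a), Fintype.sum_prod_type]
    have step : ∀ a' : Fin n → A,
        (∑ β : A, Ψ (List.ofFn (Fin.snoc a' β : Fin (n+1) → A) : Multiset A)
            * chainW w (Fin.snoc a' β : Fin (n+1) → A))
          ≤ (Ψ (List.ofFn a' : Multiset A) * chainW w a') * T n := by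
      intro a'
      have hpos := hΨ (List.ofFn a' : Multiset A)
      have hsum_eq : (∑ β : A, Ψ (List.ofFn (Fin.snoc a' β : Fin (n+1) → A) : Multiset A)
            * chainW w (Fin.snoc a' β : Fin (n+1) → A))
          = (Ψ (List.ofFn a' : Multiset A) * chainW w a') *
              ∑ β : A, Wpt w β a' *
                (Ψ ((List.ofFn a' : Multiset A) + {β}) / Ψ (List.ofFn a' : Multiset A)) := by
        rw [Finset.mul_sum]
        apply Finset.sum_congr rfl
        intro β _
        rw [ofFn_snoc_multiset, chainW_snoc, if_neg hne]
        field_simp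
      rw [hsum_eq]
      apply mul_le_mul_of_nonneg_left _ (mul_nonneg (hΨ _).le (chainW_nonneg w hw0 a'))
      rw [hT n hn]
      exact le_ciSup (f := fun a : Fin n → A => ∑ β : A, Wpt w β a *
        (Ψ ((List.ofFn a : Multiset A) + {β}) / Ψ (List.ofFn a : Multiset A)))
        (Set.Finite.bddAbove (Set.finite_range _)) a'
    have hSnn : ∀ a' : Fin n → A, 0 ≤ ∑ β : A, Wpt w β a' *
        (Ψ ((List.ofFn a' : Multiset A) + {β}) / Ψ (List.ofFn a' : Multiset A)) := by
      intro a'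
      apply Finset.sum_nonneg
      intro β _
      exact mul_nonneg (Wpt_nonneg w hw0 _ _) (div_nonneg (hΨ _).le (hΨ _).le)
    have hTn : 0 ≤ T n := by
      have a' : Fin n → A := Classical.arbitrary _
      refine le_trans (hSnn a') ?_
      rw [hT n hn]
      exact le_ciSup (f := fun a : Fin n → A => ∑ β : A, Wpt w β a *
        (Ψ ((List.ofFn a : Multiset A) + {β}) / Ψ (List.ofFn a : Multiset A)))
        (Set.Finite.bddAbove (Set.finite_range _)) a'
    calc (∑ a' : Fin n → A, ∑ β : A,
            Ψ (List.ofFn (Fin.snoc a' β : Fin (n+1) → A) : Multiset A)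
              * chainW w (Fin.snoc a' β : Fin (n+1) → A))
        ≤ ∑ a' : Fin n → A, (Ψ (List.ofFn a' : Multiset A) * chainW w a') * T n :=
          Finset.sum_le_sum (fun a' _ => step a')
      _ = (∑ a' : Fin n → A, Ψ (List.ofFn a' : Multiset A) * chainW w a') * T n := by
          rw [Finset.sum_mul]
      _ ≤ (R * ∏ ℓ ∈ Finset.Ico 1 n, T ℓ) * T n := mul_le_mul_of_nonneg_right ih hTn
      _ = R * ∏ ℓ ∈ Finset.Ico 1 (n+1), T ℓ := by
          rw [Finset.prod_Ico_succ_top hn]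
          ring

end lemB

section multilin
variable {Ω : Type*} [MeasurableSpace Ω] {μ : Measure Ω}
variable {A : Type*} [DecidableEq A] [Nonempty A]

lemma integrable_prod_subset {r : ℕ} (Y : A → Ω → ℝ)
    (hint : ∀ (k : ℕ) (b : Fin k → A), Integrable (fun ω => ∏ i, Y (b i) ω) μ)
    (c : Fin r → A) (B : Finset (Fin r)) :
    Integrable (fun ω => ∏ i ∈ B, Y (c i) ω) μ := by
  let e := B.orderIsoOfFin rfl
  have h : (fun ω => ∏ i ∈ B, Y (c i) ω)
      = fun ω => ∏ j : Fin B.card, Y (c (e j)) ω := by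
    funext ω
    rw [← Finset.prod_coe_sort B (fun i => Y (c i) ω)]
    exact (Equiv.prod_comp e.toEquiv (fun i : B => Y (c i) ω)).symm
  rw [h]
  exact hint _ _

lemma integrable_prod_attach {r : ℕ} (Y : A → Ω → ℝ)
    (hint : ∀ (k : ℕ) (b : Fin k → A), Integrable (fun ω => ∏ i, Y (b i) ω) μ)
    (B : Finset (Fin r)) (p : (i : Fin r) → i ∈ B → A) :
    Integrable (fun ω => ∏ x ∈ B.attach, Y (p x.1 x.2) ω) μ := by
  classical
  set c : Fin r → A := fun i => if h : i ∈ B then p i h else Classical.arbitrary A with hc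
  have h : (fun ω => ∏ x ∈ B.attach, Y (p x.1 x.2) ω)
      = fun ω => ∏ i ∈ B, Y (c i) ω := by
    funext ω
    rw [← Finset.prod_attach B (fun i => Y (c i) ω)]
    apply Finset.prod_congr rfl
    intro x _
    congr 1
    rw [hc]
    simp [x.2]
  rw [h]
  exact integrable_prod_subset Y hint c B

lemma integral_prod_sum_expand {r : ℕ} (Y : A → Ω → ℝ)
    (hint : ∀ (k : ℕ) (b : Fin k → A), Integrable (fun ω => ∏ i, Y (b i) ω) μ)
    (S : Fin r → Finset A) (B : Finset (Fin r)) :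
    ∫ ω, ∏ i ∈ B, (∑ α ∈ S i, Y α ω) ∂μ
      = ∑ p ∈ B.pi S, ∫ ω, ∏ x ∈ B.attach, Y (p x.1 x.2) ω ∂μ := by
  have h1 : (fun ω => ∏ i ∈ B, (∑ α ∈ S i, Y α ω))
      = fun ω => ∑ p ∈ B.pi S, ∏ x ∈ B.attach, Y (p x.1 x.2) ω := by
    funext ω
    exact Finset.prod_sum B S (fun i α => Y α ω)
  rw [h1]
  exact integral_finset_sum _ (fun p _ => integrable_prod_attach Y hint B p)

lemma prod_integral_expand {r : ℕ} (Y : A → Ω → ℝ)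
    (hint : ∀ (k : ℕ) (b : Fin k → A), Integrable (fun ω => ∏ i, Y (b i) ω) μ)
    [Fintype A]
    (S : Fin r → Finset A) (π : Finpartition (Finset.univ : Finset (Fin r))) :
    ∏ B ∈ π.parts, ∫ ω, ∏ i ∈ B, (∑ α ∈ S i, Y α ω) ∂μ
      = ∑ b ∈ Fintype.piFinset S, ∏ B ∈ π.parts, ∫ ω, ∏ i ∈ B, Y (b i) ω ∂μ := by
  classical
  rw [Finset.prod_congr rfl (fun B _ => integral_prod_sum_expand Y hint S B)]
  rw [Finset.prod_sum]
  refine Finset.sum_nbij' (i := fun q => fun i : Fin r =>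
      q (π.part i) (π.part_mem.mpr (Finset.mem_univ i)) i (π.mem_part (Finset.mem_univ i)))
    (j := fun b => fun B _ => fun i _ => b i) ?_ ?_ ?_ ?_ ?_
  · -- maps into piFinset
    intro q hq
    rw [Fintype.mem_piFinset]
    intro i
    exact Finset.mem_pi.mp (Finset.mem_pi.mp hq _ (π.part_mem.mpr (Finset.mem_univ i)))
      i (π.mem_part (Finset.mem_univ i))
  · -- maps into pi
    intro b hb
    rw [Finset.mem_pi]
    intro B hB
    rw [Finset.mem_pi]
    intro i hi
    exact (Fintype.mem_piFinset.mp hb) i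
  · -- left inverse
    intro q hq
    funext B hB i hi
    have hpart : π.part i = B :=
      π.eq_of_mem_parts (π.part_mem.mpr (Finset.mem_univ i)) hB (π.mem_part (Finset.mem_univ i)) hi
    subst hpart
    rfl
  · -- right inverse
    intro b _
    rfl
  · -- values agree
    intro q hq
    rw [← Finset.prod_attach π.parts (fun B => ∫ ω, ∏ i ∈ B,
        Y ((fun i : Fin r => q (π.part i) (π.part_mem.mpr (Finset.mem_univ i)) i
          (π.mem_part (Finset.mem_univ i))) i) ω ∂μ)]
    apply Finset.prod_congr rfl
    intro B _
    congr 1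
    funext ω
    rw [← Finset.prod_attach (B : Finset (Fin r)) (fun i => Y (q (π.part i)
        (π.part_mem.mpr (Finset.mem_univ i)) i (π.mem_part (Finset.mem_univ i))) ω)]
    apply Finset.prod_congr rfl
    intro x _
    have hpart : π.part (x : Fin r) = (B : Finset (Fin r)) :=
      π.eq_of_mem_parts (π.part_mem.mpr (Finset.mem_univ _)) B.2
        (π.mem_part (Finset.mem_univ _)) x.2
    have key : ∀ (C : Finset (Fin r)) (hC : C ∈ π.parts) (hic : (x : Fin r) ∈ C)
        (hD : π.part (x : Fin r) ∈ π.parts) (hid : (x : Fin r) ∈ π.part (x : Fin r)),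
        π.part (x : Fin r) = C →
        q (π.part (x : Fin r)) hD (x : Fin r) hid = q C hC (x : Fin r) hic := by
      rintro C hC hic hD hid rfl
      rfl
    exact congrArg (fun t => Y t ω) (key _ B.2 x.2 _ _ hpart).symm

lemma jointCumulant_sum {r : ℕ} (Y : A → Ω → ℝ)
    (hint : ∀ (k : ℕ) (b : Fin k → A), Integrable (fun ω => ∏ i, Y (b i) ω) μ)
    [Fintype A] (S : Fin r → Finset A) :
    jointCumulant μ (fun i ω => ∑ α ∈ S i, Y α ω)
      = ∑ b ∈ Fintype.piFinset S, jointCumulant μ (fun i => Y (b i)) := by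
  rw [jointCumulant]
  have h : ∀ π : Finpartition (Finset.univ : Finset (Fin r)),
      (-1 : ℝ) ^ (π.parts.card - 1) * (Nat.factorial (π.parts.card - 1) : ℝ) *
        ∏ B ∈ π.parts, ∫ ω, ∏ i ∈ B, (∑ α ∈ S i, Y α ω) ∂μ
      = ∑ b ∈ Fintype.piFinset S, (-1 : ℝ) ^ (π.parts.card - 1) *
          (Nat.factorial (π.parts.card - 1) : ℝ) * ∏ B ∈ π.parts, ∫ ω, ∏ i ∈ B, Y (b i) ω ∂μ := by
    intro π
    rw [prod_integral_expand Y hint S π, Finset.mul_sum]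
  rw [Finset.sum_congr rfl (fun π _ => h π), Finset.sum_comm]
  rfl

end multilin


/-- Bound on the joint cumulants of sums over subsets `S 0, …, S (r-1)`
of the index set of a family admitting a `(Ψ, C)` weighted dependency graph:
`|κ(Σ_{α∈A₁} Y_α, …, Σ_{α∈A_r} Y_α)| ≤ C_r · r! · R · T₁ ⋯ T_{r-1}`. -/
theorem jointCumulant_sums_le_of_isWDG
    {Ω : Type*} [MeasurableSpace Ω] (μ : Measure Ω) [IsProbabilityMeasure μ]
    {A : Type*} [Fintype A] [DecidableEq A] [Nonempty A]
    (Y : A → Ω → ℝ)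
    (hint : ∀ (k : ℕ) (b : Fin k → A), Integrable (fun ω => ∏ i, Y (b i) ω) μ)
    (w : A → A → ℝ) (hsym : ∀ a b, w a b = w b a)
    (hw0 : ∀ a b, 0 ≤ w a b) (hw1 : ∀ a b, w a b ≤ 1)
    (Ψ : Multiset A → ℝ) (hΨ : ∀ B, 0 < Ψ B)
    (C : ℕ → ℝ) (hC : ∀ k, 0 < C k)
    (hWDG : IsWDG μ Y w Ψ C)
    (R : ℝ) (hR : R = ∑ α : A, Ψ {α})
    (T : ℕ → ℝ)
    (hT : ∀ ℓ : ℕ, 1 ≤ ℓ → T ℓ = ⨆ a : Fin ℓ → A, ∑ β : A,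
        Wpt w β a * (Ψ ((List.ofFn a : Multiset A) + {β}) / Ψ (List.ofFn a : Multiset A)))
    (r : ℕ) (hr : 1 ≤ r) (S : Fin r → Finset A) :
    |jointCumulant μ (fun i : Fin r => fun ω => ∑ α ∈ S i, Y α ω)| ≤
      C r * (Nat.factorial r : ℝ) * R * ∏ ℓ ∈ Finset.Ico 1 r, T ℓ := by
    classical
  rw [jointCumulant_sum Y hint S]
  have hterm : ∀ b : Fin r → A, |jointCumulant μ (fun i => Y (b i))|
      ≤ C r * Ψ (List.ofFn b : Multiset A) * treeMax (inducedW w b) := hWDG r hr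
  have hterm_nn : ∀ b : Fin r → A,
      0 ≤ C r * Ψ (List.ofFn b : Multiset A) * treeMax (inducedW w b) := by
    intro b
    refine mul_nonneg (mul_nonneg (hC r).le (hΨ _).le) ?_
    apply Real.sSup_nonneg
    rintro x ⟨Tr, _, rfl⟩
    exact Finset.prod_nonneg fun e _ => edgeWeight_inducedW_nonneg w hw0 b e
  have h1 : |∑ b ∈ Fintype.piFinset S, jointCumulant μ fun i => Y (b i)|
      ≤ ∑ b : Fin r → A, C r * Ψ (List.ofFn b : Multiset A) * treeMax (inducedW w b) := by
    refine le_trans (Finset.abs_sum_le_sum_abs _ _) ?_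
    refine le_trans (Finset.sum_le_sum fun b _ => hterm b) ?_
    exact Finset.sum_le_sum_of_subset_of_nonneg (Finset.subset_univ _) fun b _ _ => hterm_nn b
  have h2 : ∑ b : Fin r → A, C r * Ψ (List.ofFn b : Multiset A) * treeMax (inducedW w b)
      ≤ ∑ b : Fin r → A, C r * Ψ (List.ofFn b : Multiset A) *
          ∑ σ : Equiv.Perm (Fin r), chainW w (b ∘ ⇑σ) := by
    refine Finset.sum_le_sum fun b _ => ?_
    exact mul_le_mul_of_nonneg_left (treeMax_le_sum_chainW hr w hsym hw0 hw1 b)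
      (mul_nonneg (hC r).le (hΨ _).le)
  have h3 : ∑ b : Fin r → A, C r * Ψ (List.ofFn b : Multiset A) *
        ∑ σ : Equiv.Perm (Fin r), chainW w (b ∘ ⇑σ)
      = C r * ∑ σ : Equiv.Perm (Fin r), ∑ b : Fin r → A,
          Ψ (List.ofFn (b ∘ ⇑σ) : Multiset A) * chainW w (b ∘ ⇑σ) := by
    have e1 : ∀ b : Fin r → A, C r * Ψ (List.ofFn b : Multiset A) *
        ∑ σ : Equiv.Perm (Fin r), chainW w (b ∘ ⇑σ)
        = ∑ σ : Equiv.Perm (Fin r), C r *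
            (Ψ (List.ofFn (b ∘ ⇑σ) : Multiset A) * chainW w (b ∘ ⇑σ)) := by
      intro b
      rw [Finset.mul_sum]
      apply Finset.sum_congr rfl
      intro σ _
      rw [ofFn_comp_perm_multiset b σ]
      ring
    rw [Finset.sum_congr rfl (fun b _ => e1 b), Finset.sum_comm, Finset.mul_sum]
    apply Finset.sum_congr rfl
    intro σ _
    rw [Finset.mul_sum]
  have h4 : ∀ σ : Equiv.Perm (Fin r),
      ∑ b : Fin r → A, Ψ (List.ofFn (b ∘ ⇑σ) : Multiset A) * chainW w (b ∘ ⇑σ)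
        = ∑ a : Fin r → A, Ψ (List.ofFn a : Multiset A) * chainW w a := by
    intro σ
    let e : (Fin r → A) ≃ (Fin r → A) :=
      { toFun := fun b => b ∘ ⇑σ
        invFun := fun b => b ∘ ⇑σ.symm
        left_inv := by intro b; funext i; simp
        right_inv := by intro b; funext i; simp }
    exact Equiv.sum_comp e (fun a => Ψ (List.ofFn a : Multiset A) * chainW w a)
  have hB := sum_psi_chainW_le w hw0 Ψ hΨ R hR T hT r hr
  have h5 : C r * ∑ σ : Equiv.Perm (Fin r), ∑ b : Fin r → A,
        Ψ (List.ofFn (b ∘ ⇑σ) : Multiset A) * chainW w (b ∘ ⇑σ)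
      ≤ C r * ((Nat.factorial r : ℝ) * (R * ∏ ℓ ∈ Finset.Ico 1 r, T ℓ)) := by
    apply mul_le_mul_of_nonneg_left _ (hC r).le
    rw [Finset.sum_congr rfl (fun σ _ => h4 σ), Finset.sum_const]
    rw [Finset.card_univ, Fintype.card_perm, Fintype.card_fin, nsmul_eq_mul]
    exact mul_le_mul_of_nonneg_left hB (Nat.cast_nonneg _)
  calc |∑ b ∈ Fintype.piFinset S, jointCumulant μ fun i => Y (b i)|
      ≤ ∑ b : Fin r → A, C r * Ψ (List.ofFn b : Multiset A) * treeMax (inducedW w b) := h1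
    _ ≤ ∑ b : Fin r → A, C r * Ψ (List.ofFn b : Multiset A) *
          ∑ σ : Equiv.Perm (Fin r), chainW w (b ∘ ⇑σ) := h2
    _ = C r * ∑ σ : Equiv.Perm (Fin r), ∑ b : Fin r → A,
          Ψ (List.ofFn (b ∘ ⇑σ) : Multiset A) * chainW w (b ∘ ⇑σ) := h3
    _ ≤ C r * ((Nat.factorial r : ℝ) * (R * ∏ ℓ ∈ Finset.Ico 1 r, T ℓ)) := h5
    _ = C r * (Nat.factorial r : ℝ) * R * ∏ ℓ ∈ Finset.Ico 1 r, T ℓ := by ring
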